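/- Let f : ℤ → ℤ be congruence preserving and tower-stable, and let n be a positive integer. Then there exists a nonnegative integer K such that λ_f^k(n) = 1 for all k ≥ K, where λ_f^k denotes the k-fold composite of the function λ_f : ℕ⁺ → ℕ⁺. -/

import Mathlib

/-- `f : ℤ → ℤ` is congruence preserving if `n ∣ (s − t)` implies
`n ∣ (f(s) − f(t))` for every positive integer `n`. -/
def IsCongruencePreserving (f : ℤ → ℤ) : Prop :=
  ∀ (s t : ℤ) (n : ℕ), 0 < n → (n : ℤ) ∣ s - t → (n : ℤ) ∣ f s - f t

/-- The reduction `f_m : ℤ/mℤ → ℤ/mℤ` of a map `f : ℤ → ℤ`. -/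
def intReduction (f : ℤ → ℤ) (m : ℕ) : ZMod m → ZMod m :=
  fun x => ((f (x.val : ℤ) : ℤ) : ZMod m)

/-- The period of a self-map: the least positive `L` with `σ^[K+L] = σ^[K]`
for some `K`. -/
noncomputable def mapPeriod {F : Type*} (σ : F → F) : ℕ :=
  sInf {L : ℕ | 0 < L ∧ ∃ K : ℕ, σ^[K + L] = σ^[K]}

/-- `λ_f : ℕ → ℕ`, the period of the reduction of `f` modulo `n`. -/
noncomputable def lambdaF (f : ℤ → ℤ) : ℕ → ℕ :=
  fun n => mapPeriod (intReduction f n)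

/-- `σ` is a cyclic permutation of length `p` of its (finite) domain: it is a
bijection and the iterates of some element pass through all elements within
`p` steps. -/
def IsCyclicPermOfLength {F : Type*} (σ : F → F) (p : ℕ) : Prop :=
  Function.Bijective σ ∧ ∃ x : F, ∀ y : F, ∃ i : ℕ, i < p ∧ σ^[i] x = y

/-- A congruence preserving `f` is tower-stable if no reduction modulo a
prime `p` is a cyclic permutation of length `p`. -/
def TowerStable (f : ℤ → ℤ) : Prop :=
  ∀ p : ℕ, p.Prime → ¬ IsCyclicPermOfLength (intReduction f p) p


section PeriodTheory

variable {F : Type*} (σ : F → F)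

/-- auxiliary: period property -/
def PerAt (σ : F → F) (K L : ℕ) : Prop := σ^[K + L] = σ^[K]

lemma perAt_shift {σ : F → F} {K L : ℕ} (h : PerAt σ K L) (M : ℕ) :
    PerAt σ (K + M) L := by
  unfold PerAt at *
  have : σ^[K + M + L] = σ^[M] ∘ σ^[K + L] := by
    rw [← Function.iterate_add]; ring_nf
  rw [this, h, ← Function.iterate_add]; ring_nf

lemma perAt_mul {σ : F → F} {K L : ℕ} (h : PerAt σ K L) (t : ℕ) :
    σ^[K + t * L] = σ^[K] := by
  induction t with
  | zero => simp
  | succ t ih =>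
    have h2 : σ^[K + t * L + L] = σ^[K + t * L] := by
      have : σ^[K + t * L + L] = σ^[t * L] ∘ σ^[K + L] := by
        rw [← Function.iterate_add]; ring_nf
      rw [this, h, ← Function.iterate_add, Nat.add_comm]
    calc σ^[K + (t+1) * L] = σ^[K + t * L + L] := by ring_nf
    _ = σ^[K + t * L] := h2
    _ = σ^[K] := ih

lemma perAt_ge_dvd {σ : F → F} {K L : ℕ} (h : PerAt σ K L) {K' L' : ℕ}
    (hK : K ≤ K') (hL : L ∣ L') : PerAt σ K' L' := by
  obtain ⟨t, rfl⟩ := hL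
  obtain ⟨M, rfl⟩ := Nat.exists_eq_add_of_le hK
  have := perAt_mul (perAt_shift h M) t
  unfold PerAt
  rw [Nat.mul_comm] at this
  exact this

lemma mapPeriod_dvd {σ : F → F} {K L : ℕ} (hL : 0 < L) (h : PerAt σ K L) :
    mapPeriod σ ∣ L := by
  have hne : {L : ℕ | 0 < L ∧ ∃ K : ℕ, σ^[K + L] = σ^[K]}.Nonempty := ⟨L, hL, K, h⟩
  have hmem := Nat.sInf_mem hne
  obtain ⟨hdpos, Kd, hd⟩ := hmem
  show sInf {L : ℕ | 0 < L ∧ ∃ K : ℕ, σ^[K + L] = σ^[K]} ∣ L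
  set d := sInf {L : ℕ | 0 < L ∧ ∃ K : ℕ, σ^[K + L] = σ^[K]} with hdd
  -- show d ∣ L via remainder
  rcases Nat.eq_zero_or_pos (L % d) with hr | hr
  · exact Nat.dvd_of_mod_eq_zero hr
  · exfalso
    set K0 := max K Kd with hK0
    have h1 : PerAt σ K0 L := perAt_ge_dvd h (le_max_left _ _) dvd_rfl
    have h2 : PerAt σ K0 d := perAt_ge_dvd hd (le_max_right _ _) dvd_rfl
    have h3 : σ^[K0 + L % d] = σ^[K0] := by
      have e1 : σ^[(K0 + L % d) + (L / d) * d] = σ^[K0 + L % d] :=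
        perAt_mul (perAt_shift h2 (L % d)) (L / d)
      have e2 : (K0 + L % d) + (L / d) * d = K0 + L := by
        have := Nat.mod_add_div L d
        rw [Nat.mul_comm]
        omega
      rw [e2] at e1
      rw [← e1, h1]
    have : L % d ∈ {L : ℕ | 0 < L ∧ ∃ K : ℕ, σ^[K + L] = σ^[K]} := ⟨hr, K0, h3⟩
    have := Nat.sInf_le this
    have hlt : L % d < d := Nat.mod_lt _ hdpos
    omega

lemma mapPeriod_exists [Finite F] (σ : F → F) :
    ∃ K, PerAt σ K (mapPeriod σ) ∧ 0 < mapPeriod σ := by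
  have hne : {L : ℕ | 0 < L ∧ ∃ K : ℕ, σ^[K + L] = σ^[K]}.Nonempty := by
    obtain ⟨a, b, hab, he⟩ := Finite.exists_ne_map_eq_of_infinite (fun i : ℕ => σ^[i])
    rcases Nat.lt_or_ge a b with h | h
    · exact ⟨b - a, by omega, a, by rw [show a + (b-a) = b by omega]; exact he.symm⟩
    · have : b < a := by omega
      exact ⟨a - b, by omega, b, by rw [show b + (a-b) = a by omega]; exact he⟩
  have hmem := Nat.sInf_mem hne
  exact ⟨hmem.2.choose, hmem.2.choose_spec, hmem.1⟩

/-- pointwise versions -/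
lemma pt_per {σ : F → F} {k d : ℕ} {x : F} (h : σ^[k + d] x = σ^[k] x)
    (M t : ℕ) : σ^[k + M + t * d] x = σ^[k + M] x := by
  induction t with
  | zero => simp
  | succ t ih =>
    have : σ^[k + M + (t+1) * d] x = σ^[M + t*d] (σ^[k + d] x) := by
      rw [← Function.iterate_add_apply]; ring_nf
    rw [this, h, ← Function.iterate_add_apply]
    have e : M + t * d + k = k + M + t * d := by ring
    rw [e]; exact ih

end PeriodTheory

lemma mapPeriod_subsingleton {F : Type*} [Subsingleton F] (σ : F → F) :
    mapPeriod σ = 1 := by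
  have h1 : (1 : ℕ) ∈ {L : ℕ | 0 < L ∧ ∃ K : ℕ, σ^[K + L] = σ^[K]} :=
    ⟨one_pos, 0, funext fun x => Subsingleton.elim _ _⟩
  have hle := Nat.sInf_le h1
  have hmem := Nat.sInf_mem ⟨1, h1⟩
  have := hmem.1
  unfold mapPeriod
  omega
section Compat

variable {f : ℤ → ℤ}

lemma intReduction_congr (hf : IsCongruencePreserving f) {m : ℕ} (hm : 0 < m) {a b : ℤ}
    (h : (m : ℤ) ∣ a - b) : ((f a : ℤ) : ZMod m) = ((f b : ℤ) : ZMod m) := by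
  have := hf a b m hm h
  have : ((f a - f b : ℤ) : ZMod m) = 0 := by
    rw [ZMod.intCast_zmod_eq_zero_iff_dvd]; exact this
  push_cast at this
  linear_combination this

lemma cast_intReduction (hf : IsCongruencePreserving f) {m n : ℕ} (hm : 0 < m) (hn : 0 < n) (hmn : m ∣ n)
    (x : ZMod n) :
    ZMod.castHom hmn (ZMod m) (intReduction f n x)
      = intReduction f m (ZMod.castHom hmn (ZMod m) x) := by
  haveI : NeZero n := ⟨hn.ne'⟩
  haveI : NeZero m := ⟨hm.ne'⟩
  unfold intReduction
  rw [map_intCast]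
  have hval : (ZMod.castHom hmn (ZMod m) x) = ((x.val : ℕ) : ZMod m) := by
    rw [ZMod.castHom_apply, ← ZMod.natCast_val]
  rw [hval]
  have hv2 : (((x.val : ℕ) : ZMod m)).val = x.val % m := ZMod.val_natCast _ _
  apply intReduction_congr hf hm
  rw [hv2]
  have : ((x.val % m : ℕ) : ℤ) = (x.val : ℤ) % m := by push_cast; ring
  rw [this]
  exact ⟨(x.val : ℤ) / m, by linarith [Int.mul_ediv_add_emod (x.val : ℤ) (m : ℤ)]⟩

lemma cast_intReduction_iterate (hf : IsCongruencePreserving f) {m n : ℕ} (hm : 0 < m) (hn : 0 < n) (hmn : m ∣ n)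
    (j : ℕ) (x : ZMod n) :
    ZMod.castHom hmn (ZMod m) ((intReduction f n)^[j] x)
      = (intReduction f m)^[j] (ZMod.castHom hmn (ZMod m) x) := by
  induction j with
  | zero => rfl
  | succ j ih =>
    rw [Function.iterate_succ_apply', Function.iterate_succ_apply',
      cast_intReduction hf hm hn hmn, ih]

end Compat
section Primes

variable {f : ℤ → ℤ}

lemma zmod_crt_inj {a b : ℕ} (ha : 0 < a) (hb : 0 < b) (hab : a.Coprime b)
    {x y : ZMod (a * b)}
    (h1 : ZMod.castHom (dvd_mul_right a b) (ZMod a) x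
        = ZMod.castHom (dvd_mul_right a b) (ZMod a) y)
    (h2 : ZMod.castHom (dvd_mul_left b a) (ZMod b) x
        = ZMod.castHom (dvd_mul_left b a) (ZMod b) y) : x = y := by
  haveI : NeZero (a * b) := ⟨by positivity⟩
  have hz1 : ZMod.castHom (dvd_mul_right a b) (ZMod a) (x - y) = 0 := by
    rw [map_sub, h1, sub_self]
  have hz2 : ZMod.castHom (dvd_mul_left b a) (ZMod b) (x - y) = 0 := by
    rw [map_sub, h2, sub_self]
  set z := x - y with hz
  have hva : ((z.val : ℕ) : ZMod a) = 0 := by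
    rw [ZMod.natCast_val]; exact hz1
  have hvb : ((z.val : ℕ) : ZMod b) = 0 := by
    rw [ZMod.natCast_val]; exact hz2
  rw [ZMod.natCast_eq_zero_iff] at hva hvb
  have hd : a * b ∣ z.val := Nat.Coprime.mul_dvd_of_dvd_of_dvd hab hva hvb
  have hlt : z.val < a * b := ZMod.val_lt z
  have hv0 : z.val = 0 := Nat.eq_zero_of_dvd_of_lt hd hlt
  have hz0 : z = 0 := by rwa [← ZMod.val_eq_zero]
  exact sub_eq_zero.mp hz0

lemma lambdaF_mul_coprime (hf : IsCongruencePreserving f) {a b : ℕ}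
    (ha : 0 < a) (hb : 0 < b) (hab : a.Coprime b) :
    lambdaF f (a * b) ∣ Nat.lcm (lambdaF f a) (lambdaF f b) := by
  haveI : NeZero a := ⟨ha.ne'⟩
  haveI : NeZero b := ⟨hb.ne'⟩
  haveI : NeZero (a * b) := ⟨by positivity⟩
  obtain ⟨Ka, hKa, hpa⟩ := mapPeriod_exists (intReduction f a)
  obtain ⟨Kb, hKb, hpb⟩ := mapPeriod_exists (intReduction f b)
  set L := Nat.lcm (lambdaF f a) (lambdaF f b) with hL
  have hLpos : 0 < L := Nat.pos_of_ne_zero (Nat.lcm_ne_zero hpa.ne' hpb.ne')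
  set K := max Ka Kb with hK
  have hpera : PerAt (intReduction f a) K L :=
    perAt_ge_dvd hKa (le_max_left _ _) (Nat.dvd_lcm_left _ _)
  have hperb : PerAt (intReduction f b) K L :=
    perAt_ge_dvd hKb (le_max_right _ _) (Nat.dvd_lcm_right _ _)
  have hper : PerAt (intReduction f (a * b)) K L := by
    funext x
    apply zmod_crt_inj ha hb hab
    · rw [cast_intReduction_iterate hf ha (by positivity) (dvd_mul_right a b),
        cast_intReduction_iterate hf ha (by positivity) (dvd_mul_right a b)]
      exact congrFun hpera _
    · rw [cast_intReduction_iterate hf hb (by positivity) (dvd_mul_left b a),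
        cast_intReduction_iterate hf hb (by positivity) (dvd_mul_left b a)]
      exact congrFun hperb _
  exact mapPeriod_dvd hLpos hper

lemma lambdaF_prime (hts : TowerStable f) {p : ℕ} (hp : p.Prime) :
    lambdaF f p ∣ (p - 1).factorial := by
  haveI : NeZero p := ⟨hp.pos.ne'⟩
  set σ := intReduction f p with hσ
  have hpt : ∀ x : ZMod p, ∃ k d : ℕ, k ≤ p ∧ 0 < d ∧ d < p ∧ σ^[k + d] x = σ^[k] x := by
    intro x
    by_cases hcol : ∃ i j : ℕ, i < j ∧ j ≤ p ∧ j - i < p ∧ σ^[i] x = σ^[j] x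
    · obtain ⟨i, j, hij, hjp, hd, he⟩ := hcol
      exact ⟨i, j - i, by omega, by omega, hd, by rw [show i + (j - i) = j by omega]; exact he.symm⟩
    · exfalso
      push_neg at hcol
      -- all of σ^[0] x, ..., σ^[p-1] x are distinct
      have hinj : Function.Injective (fun a : Fin p => σ^[(a : ℕ)] x) := by
        intro a b hab
        by_contra hne
        rcases Nat.lt_or_ge (a : ℕ) (b : ℕ) with h | h
        · exact absurd (hcol a b h (by omega) (by omega) hab) (by simp)
        · have hlt : (b : ℕ) < (a : ℕ) := by
            rcases Nat.lt_or_ge (b : ℕ) (a : ℕ) with h' | h'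
            · exact h'
            · exfalso; exact hne (Fin.ext (by omega))
          exact absurd (hcol b a hlt (by omega) (by omega) hab.symm) (by simp)
      have hbij : Function.Bijective (fun a : Fin p => σ^[(a : ℕ)] x) := by
        rw [Fintype.bijective_iff_injective_and_card]
        exact ⟨hinj, by simp [ZMod.card]⟩
      -- get σ^[p] x = x
      obtain ⟨a0, ha0'⟩ := hbij.2 (σ^[p] x)
      have ha0 : σ^[(a0 : ℕ)] x = σ^[p] x := ha0'
      have hpx : σ^[p] x = x := by
        rcases Nat.eq_zero_or_pos (a0 : ℕ) with h0 | h0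
        · rw [← ha0, h0]; rfl
        · exfalso
          exact absurd (hcol (a0 : ℕ) p (a0.2) le_rfl (by omega) (by rw [ha0])) (by simp)
      have hsurj : Function.Surjective σ := by
        intro y
        obtain ⟨a, hay'⟩ := hbij.2 y
        have hay : σ^[(a : ℕ)] x = y := hay'
        rcases Nat.eq_zero_or_pos (a : ℕ) with h0 | h0
        · refine ⟨σ^[p - 1] x, ?_⟩
          have h5 : σ (σ^[p-1] x) = σ^[(p-1)+1] x :=
            (Function.iterate_succ_apply' σ (p-1) x).symm
          rw [h5, show (p-1)+1 = p from by omega, hpx, ← hay, h0]; rfl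
        · refine ⟨σ^[(a : ℕ) - 1] x, ?_⟩
          have h5 : σ (σ^[(a:ℕ)-1] x) = σ^[((a:ℕ)-1)+1] x :=
            (Function.iterate_succ_apply' σ ((a:ℕ)-1) x).symm
          rw [h5, show ((a:ℕ)-1)+1 = (a:ℕ) from by omega, hay]
      have hbijσ : Function.Bijective σ := ⟨Finite.injective_iff_surjective.mpr hsurj, hsurj⟩
      apply hts p hp
      refine ⟨hbijσ, x, fun y => ?_⟩
      obtain ⟨a, hay⟩ := hbij.2 y
      exact ⟨(a : ℕ), a.2, hay⟩
  -- combine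
  have hper : PerAt σ p ((p - 1).factorial) := by
    funext x
    obtain ⟨k, d, hk, hd0, hdp, he⟩ := hpt x
    obtain ⟨t, ht⟩ : d ∣ (p - 1).factorial := Nat.dvd_factorial hd0 (by omega)
    have := pt_per he (p - k) t
    rw [show k + (p - k) = p by omega] at this
    rw [show (p:ℕ) + (p-1).factorial = p + t * d by rw [ht]; ring] at *
    exact this
  exact mapPeriod_dvd (Nat.factorial_pos _) hper

lemma lambdaF_prime_pow_succ (hf : IsCongruencePreserving f) {p : ℕ} (hp : p.Prime)
    (e : ℕ) (he : 1 ≤ e) :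
    lambdaF f (p ^ (e + 1)) ∣ lambdaF f (p ^ e) * p.factorial := by
  have hpe : 0 < p ^ e := Nat.pow_pos hp.pos
  have hpe1 : 0 < p ^ (e + 1) := Nat.pow_pos hp.pos
  haveI : NeZero (p ^ e) := ⟨hpe.ne'⟩
  haveI : NeZero (p ^ (e + 1)) := ⟨hpe1.ne'⟩
  set σ := intReduction f (p ^ (e + 1)) with hσ
  set σe := intReduction f (p ^ e) with hσe
  obtain ⟨K, hK, hm⟩ := mapPeriod_exists σe
  set m := mapPeriod σe with hmm
  have hdvd : p ^ e ∣ p ^ (e + 1) := pow_dvd_pow p (by omega)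
  -- pointwise
  have hpt : ∀ x : ZMod (p ^ (e + 1)), ∃ k d : ℕ, k ≤ K + p * m ∧ 0 < d ∧ d ≤ p ∧
      σ^[k + d * m] x = σ^[k] x := by
    intro x
    set y : ℕ → ZMod (p ^ (e + 1)) := fun j => σ^[K + j * m] x with hy
    -- all casts equal
    have hcast : ∀ j : ℕ, ZMod.castHom hdvd (ZMod (p ^ e)) (y j)
        = σe^[K] (ZMod.castHom hdvd (ZMod (p ^ e)) x) := by
      intro j
      rw [hy]
      simp only
      rw [cast_intReduction_iterate hf hpe hpe1 hdvd]
      exact congrFun (perAt_mul hK j) _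
    -- quotient map into Fin p
    have hq : ∀ j : ℕ, (y j).val / p ^ e < p := by
      intro j
      have := ZMod.val_lt (y j)
      rw [Nat.div_lt_iff_lt_mul hpe]
      calc (y j).val < p ^ (e + 1) := this
      _ = p * p ^ e := by ring
    obtain ⟨i, j, hij, he2⟩ := Fintype.exists_ne_map_eq_of_card_lt
      (fun j : Fin (p + 1) => (⟨(y (j : ℕ)).val / p ^ e, hq _⟩ : Fin p)) (by simp)
    have hyij : y (i : ℕ) = y (j : ℕ) := by
      apply ZMod.val_injective
      have hrem : (y (i:ℕ)).val % p ^ e = (y (j:ℕ)).val % p ^ e := by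
        have h1 : ∀ a : ℕ, (y a).val % p ^ e
            = (ZMod.castHom hdvd (ZMod (p ^ e)) (y a)).val := by
          intro a
          rw [ZMod.castHom_apply, ← ZMod.natCast_val, ZMod.val_natCast]
        rw [h1, h1, hcast, hcast]
      have hquo : (y (i:ℕ)).val / p ^ e = (y (j:ℕ)).val / p ^ e := by
        have := congrArg Fin.val he2
        simpa using this
      calc (y (i:ℕ)).val = p ^ e * ((y (i:ℕ)).val / p ^ e) + (y (i:ℕ)).val % p ^ e :=
        (Nat.div_add_mod _ _).symm
      _ = p ^ e * ((y (j:ℕ)).val / p ^ e) + (y (j:ℕ)).val % p ^ e := by rw [hrem, hquo]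
      _ = (y (j:ℕ)).val := Nat.div_add_mod _ _
    -- wlog i < j
    rcases Nat.lt_or_ge (i : ℕ) (j : ℕ) with h | h
    · refine ⟨K + (i:ℕ) * m, (j:ℕ) - (i:ℕ), ?_, by omega, ?_, ?_⟩
      · have : (i : ℕ) ≤ p := by omega
        nlinarith [hm]
      · have : (j : ℕ) ≤ p := by omega
        omega
      · have : K + (i:ℕ) * m + ((j:ℕ) - (i:ℕ)) * m = K + (j:ℕ) * m := by
          have : ((j:ℕ) - (i:ℕ)) * m + (i:ℕ) * m = (j:ℕ) * m := by
            rw [← Nat.add_mul]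
            congr 1
            omega
          omega
        rw [this]
        exact hyij.symm
    · have hlt : (j : ℕ) < (i : ℕ) := by
        rcases Nat.lt_or_ge (j : ℕ) (i : ℕ) with h' | h'
        · exact h'
        · exfalso; exact hij (Fin.ext (by omega))
      refine ⟨K + (j:ℕ) * m, (i:ℕ) - (j:ℕ), ?_, by omega, ?_, ?_⟩
      · have : (j : ℕ) ≤ p := by omega
        nlinarith [hm]
      · have : (i : ℕ) ≤ p := by omega
        omega
      · have heq : K + (j:ℕ) * m + ((i:ℕ) - (j:ℕ)) * m = K + (i:ℕ) * m := by
          have : ((i:ℕ) - (j:ℕ)) * m + (j:ℕ) * m = (i:ℕ) * m := by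
            rw [← Nat.add_mul]
            congr 1
            omega
          omega
        rw [heq]
        exact hyij
  -- combine
  have hper : PerAt σ (K + p * m) (m * p.factorial) := by
    funext x
    obtain ⟨k, d, hk, hd0, hdp, hex⟩ := hpt x
    obtain ⟨t, ht⟩ : d * m ∣ m * p.factorial := by
      obtain ⟨s, hs⟩ := Nat.dvd_factorial hd0 hdp
      exact ⟨s, by rw [hs]; ring⟩
    have := pt_per hex (K + p * m - k) t
    rw [show k + (K + p * m - k) = K + p * m by omega] at this
    rw [show K + p * m + m * p.factorial = K + p * m + t * (d * m) by rw [ht]; ring] at *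
    exact this
  have hpos : 0 < m * p.factorial := Nat.mul_pos hm (Nat.factorial_pos _)
  exact mapPeriod_dvd hpos hper

end Primes
section Bound

variable {f : ℤ → ℤ}

/-- the bound for prime powers -/
def primeB (p e : ℕ) : ℕ := (p - 1).factorial * p.factorial ^ (e - 1)

lemma primeB_pos (p e : ℕ) : 0 < primeB p e :=
  Nat.mul_pos (Nat.factorial_pos _) (Nat.pow_pos (Nat.factorial_pos _))

lemma lambdaF_prime_pow (hf : IsCongruencePreserving f) (hts : TowerStable f)
    {p : ℕ} (hp : p.Prime) {e : ℕ} (he : 0 < e) :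
    lambdaF f (p ^ e) ∣ primeB p e := by
  induction e with
  | zero => omega
  | succ e ih =>
    rcases Nat.eq_zero_or_pos e with rfl | he'
    · simpa [primeB] using lambdaF_prime hts hp
    · have h1 := lambdaF_prime_pow_succ hf hp e he'
      have h2 : lambdaF f (p ^ e) * p.factorial ∣ primeB p e * p.factorial :=
        Nat.mul_dvd_mul_right (ih he') _
      refine h1.trans (h2.trans ?_)
      unfold primeB
      rw [show (e + 1 - 1) = (e - 1) + 1 from by omega, pow_succ]
      ring_nf
      exact dvd_rfl

/-- the global bound -/
def boundD (n : ℕ) : ℕ := n.factorization.prod fun p e => primeB p e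

lemma boundD_pos (n : ℕ) : 0 < boundD n := by
  unfold boundD Finsupp.prod
  exact Finset.prod_pos fun p _ => primeB_pos _ _

lemma lambdaF_one : lambdaF f 1 = 1 := mapPeriod_subsingleton _

lemma lambdaF_pos {n : ℕ} (hn : 0 < n) : 0 < lambdaF f n := by
  haveI : NeZero n := ⟨hn.ne'⟩
  obtain ⟨K, hK, hpos⟩ := mapPeriod_exists (intReduction f n)
  exact hpos

lemma lambdaF_dvd_boundD (hf : IsCongruencePreserving f) (hts : TowerStable f) :
    ∀ n : ℕ, 0 < n → lambdaF f n ∣ boundD n := by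
  intro n
  induction n using Nat.recOnPosPrimePosCoprime with
  | prime_pow p k hp hk =>
    intro _
    have h1 := lambdaF_prime_pow hf hts hp hk
    have h2 : boundD (p ^ k) = primeB p k := by
      unfold boundD
      rw [hp.factorization_pow, Finsupp.prod,
        Finsupp.support_single_ne_zero _ (by omega : k ≠ 0),
        Finset.prod_singleton, Finsupp.single_eq_same]
    rw [h2]; exact h1
  | zero => intro h; omega
  | one => intro _; rw [lambdaF_one]; exact one_dvd _
  | coprime a b ha hb hab iha ihb =>
    intro _
    have ha' : 0 < a := by omega
    have hb' : 0 < b := by omega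
    have h1 := lambdaF_mul_coprime hf ha' hb' hab
    have h2 : Nat.lcm (lambdaF f a) (lambdaF f b) ∣ lambdaF f a * lambdaF f b :=
      Nat.lcm_dvd_mul _ _
    have h3 : lambdaF f a * lambdaF f b ∣ boundD a * boundD b :=
      Nat.mul_dvd_mul (iha ha') (ihb hb')
    have h4 : boundD a * boundD b = boundD (a * b) := by
      unfold boundD
      rw [Nat.factorization_mul ha'.ne' hb'.ne',
        Finsupp.prod_add_index_of_disjoint]
      rw [Nat.support_factorization, Nat.support_factorization]
      exact hab.disjoint_primeFactors
    rw [← h4]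
    exact h1.trans (h2.trans h3)

lemma primeB_prime_le {q p e : ℕ} (hq : q.Prime) (h : q ∣ primeB p e) : q ≤ p := by
  unfold primeB at h
  rcases (Nat.Prime.dvd_mul hq).mp h with h | h
  · have := (Nat.Prime.dvd_factorial hq).mp h
    omega
  · have h2 : q ∣ p.factorial := hq.dvd_of_dvd_pow h
    exact (Nat.Prime.dvd_factorial hq).mp h2

lemma boundD_prime_le {q n : ℕ} (hn : 0 < n) (hq : q.Prime) (h : q ∣ boundD n) :
    ∃ p : ℕ, p.Prime ∧ p ∣ n ∧ q ≤ p := by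
  unfold boundD Finsupp.prod at h
  obtain ⟨p, hmem, hdvd⟩ := hq.prime.exists_mem_finset_dvd h
  rw [Nat.support_factorization] at hmem
  exact ⟨p, Nat.prime_of_mem_primeFactors hmem, Nat.dvd_of_mem_primeFactors hmem,
    primeB_prime_le hq hdvd⟩

lemma primeB_factorization_ne {P p e : ℕ} (hP : P.Prime) (hne : p ≠ P) (hle : p ≤ P) :
    (primeB p e).factorization P = 0 := by
  rw [Nat.factorization_eq_zero_iff]
  right; left
  intro hdvd
  have := primeB_prime_le hP hdvd
  omega

lemma primeB_factorization_self {P e : ℕ} (hP : P.Prime) :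
    (primeB P e).factorization P = e - 1 := by
  unfold primeB
  have hnd : ¬ P ∣ (P - 1).factorial := by
    intro h
    have := (Nat.Prime.dvd_factorial hP).mp h
    have := hP.two_le
    omega
  rw [Nat.factorization_mul (Nat.factorial_pos _).ne' (by positivity)]
  have h1 : ((P - 1).factorial).factorization P = 0 := by
    rw [Nat.factorization_eq_zero_iff]; right; left; exact hnd
  have h2 : (P.factorial ^ (e - 1)).factorization P = e - 1 := by
    rw [Nat.factorization_pow]
    have h3 : (P.factorial).factorization P = 1 := by
      have : P.factorial = P * (P - 1).factorial := by
        rw [← Nat.succ_pred_eq_of_pos hP.pos, Nat.factorial_succ]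
        simp [Nat.succ_pred_eq_of_pos hP.pos]
      rw [this, Nat.factorization_mul hP.pos.ne' (Nat.factorial_pos _).ne',
        hP.factorization]
      simp [h1]
    simp [h3]
  simp only [Finsupp.coe_add, Pi.add_apply, h1, h2, Nat.zero_add]

lemma boundD_factorization_le {P n : ℕ} (hn : 0 < n) (hP : P.Prime)
    (hmax : ∀ q : ℕ, q.Prime → q ∣ n → q ≤ P) :
    (boundD n).factorization P ≤ n.factorization P - 1 := by
  unfold boundD Finsupp.prod
  rw [Nat.factorization_prod (fun p _ => (primeB_pos p _).ne')]
  rw [Finset.sum_apply']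
  by_cases hPn : P ∈ n.factorization.support
  · rw [Finset.sum_eq_single_of_mem P hPn]
    · rw [primeB_factorization_self hP]
    · intro q hq hqP
      rw [Nat.support_factorization] at hq
      exact primeB_factorization_ne hP hqP
        (hmax q (Nat.prime_of_mem_primeFactors hq) (Nat.dvd_of_mem_primeFactors hq))
  · rw [Finset.sum_eq_zero]
    · omega
    · intro q hq
      have hq' := hq
      rw [Nat.support_factorization] at hq'
      by_cases hqP : q = P
      · exact absurd (hqP ▸ hq) hPn
      · exact primeB_factorization_ne hP hqP
          (hmax q (Nat.prime_of_mem_primeFactors hq') (Nat.dvd_of_mem_primeFactors hq'))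

end Bound
section Main

variable {f : ℤ → ℤ}

lemma lambdaF_iterate_one (k : ℕ) : (lambdaF f)^[k] 1 = 1 := by
  induction k with
  | zero => rfl
  | succ k ih => rw [Function.iterate_succ_apply, lambdaF_one, ih]

lemma lambdaF_factorization_le (hf : IsCongruencePreserving f) (hts : TowerStable f)
    {P n : ℕ} (hn : 0 < n) (hP : P.Prime)
    (hmax : ∀ q : ℕ, q.Prime → q ∣ n → q ≤ P) :
    (lambdaF f n).factorization P ≤ n.factorization P - 1 := by
  have h1 := lambdaF_dvd_boundD hf hts n hn
  have h2 : (lambdaF f n).factorization ≤ (boundD n).factorization :=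
    (Nat.factorization_le_iff_dvd (lambdaF_pos hn).ne' (boundD_pos n).ne').mpr h1
  exact (h2 P).trans (boundD_factorization_le hn hP hmax)

lemma lambdaF_prime_factor_le (hf : IsCongruencePreserving f) (hts : TowerStable f)
    {P n q : ℕ} (hn : 0 < n) (hq : q.Prime) (hqd : q ∣ lambdaF f n)
    (hmax : ∀ r : ℕ, r.Prime → r ∣ n → r ≤ P) : q ≤ P := by
  have h1 := hqd.trans (lambdaF_dvd_boundD hf hts n hn)
  obtain ⟨p, hp, hpn, hqp⟩ := boundD_prime_le hn hq h1
  exact hqp.trans (hmax p hp hpn)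

lemma main_aux (hf : IsCongruencePreserving f) (hts : TowerStable f) :
    ∀ P : ℕ, ∀ e : ℕ, ∀ n : ℕ, 0 < n → (∀ q : ℕ, q.Prime → q ∣ n → q ≤ P) →
      n.factorization P ≤ e → ∃ K : ℕ, ∀ k : ℕ, K ≤ k → (lambdaF f)^[k] n = 1 := by
  intro P
  induction P using Nat.strong_induction_on with
  | _ P ihP =>
    intro e
    induction e with
    | zero =>
      intro n hn hq hv
      rcases Nat.eq_or_lt_of_le hn with h1 | h1
      · exact ⟨0, fun k _ => by rw [← h1]; exact lambdaF_iterate_one k⟩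
      · -- n ≥ 2, and P does not divide n (or P not prime)
        obtain ⟨q, hqp, hqd⟩ := Nat.exists_prime_and_dvd (by omega : n ≠ 1)
        have hP1 : 1 ≤ P := by
          have := hq q hqp hqd
          have := hqp.two_le
          omega
        have hq' : ∀ q : ℕ, q.Prime → q ∣ n → q ≤ P - 1 := by
          intro r hr hrd
          have h2 := hq r hr hrd
          rcases Nat.eq_or_lt_of_le h2 with h3 | h3
          · exfalso
            subst h3
            have := hr.factorization_pos_of_dvd hn.ne' hrd
            omega
          · omega
        exact ihP (P - 1) (by omega) n n hn hq'
          (le_of_lt (Nat.factorization_lt _ hn.ne'))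
    | succ e ihe =>
      intro n hn hq hv
      rcases Nat.eq_or_lt_of_le hn with h1 | h1
      · exact ⟨0, fun k _ => by rw [← h1]; exact lambdaF_iterate_one k⟩
      · set m := lambdaF f n with hm
        have hmpos : 0 < m := lambdaF_pos hn
        have hqm : ∀ q : ℕ, q.Prime → q ∣ m → q ≤ P := fun q hq' hqd =>
          lambdaF_prime_factor_le hf hts hn hq' hqd hq
        have hvm : m.factorization P ≤ e := by
          rw [hm]
          by_cases hPp : P.Prime
          · have := lambdaF_factorization_le hf hts hn hPp hq
            omega
          · rw [Nat.factorization_eq_zero_of_not_prime _ hPp]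
            omega
        obtain ⟨K, hK⟩ := ihe m hmpos hqm hvm
        refine ⟨K + 1, fun k hk => ?_⟩
        have : (lambdaF f)^[k] n = (lambdaF f)^[k - 1] (lambdaF f n) := by
          rw [← Function.iterate_succ_apply]
          congr 1
          omega
        rw [this, ← hm]
        exact hK (k - 1) (by omega)

end Main

/-- for a tower-stable congruence preserving `f`, the iterates
of `λ_f` at `n` are eventually `1`. -/
theorem stmt_14 (f : ℤ → ℤ) (hf : IsCongruencePreserving f)
    (hts : TowerStable f) (n : ℕ) (hn : 0 < n) :
    ∃ K : ℕ, ∀ k : ℕ, K ≤ k → (lambdaF f)^[k] n = 1 := by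
  have h1 : ∀ q : ℕ, q.Prime → q ∣ n → q ≤ n := fun q _ hqd => Nat.le_of_dvd hn hqd
  exact main_aux hf hts n n n hn h1 (le_of_lt (Nat.factorization_lt _ hn.ne'))
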